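/- For γ ∈ ℝ, let d_γ be the symmetric function on the six-point set {a, b, c, e, z₁, z₂} with d(a,b) = d(a,c) = d(a,e) = d(b,c) = d(b,e) = 2, d(c,e) = 1, d(a,z₁) = d(b,z₁) = d(c,z₁) = d(e,z₁) = 1, d(a,z₂) = d(b,z₂) = d(c,z₂) = 1, d(e,z₂) = 2, and d(z₁,z₂) = γ. Then: (i) for every γ with 1 ≤ γ ≤ 2, d_γ is a metric; and (ii) for every γ > 0, d_γ is not L1-embeddable: there is no measure space (Ω, 𝒜, μ) and map φ from the six points to L1(μ) with ‖φ(x) − φ(y)‖ = d_γ(x, y) for all x, y. -/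

import Mathlib

open MeasureTheory

/-- The six-point distance function on `a = 0, b = 1, c = 2, e = 3, z₁ = 4, z₂ = 5` with
`d(a,b) = d(a,c) = d(a,e) = d(b,c) = d(b,e) = 2`, `d(c,e) = 1`,
`d(x,z₁) = 1` for `x ∈ {a,b,c,e}`, `d(a,z₂) = d(b,z₂) = d(c,z₂) = 1`, `d(e,z₂) = 2`,
and `d(z₁,z₂) = γ`. -/
noncomputable def dSix (γ : ℝ) (x y : Fin 6) : ℝ :=
  if x = y then 0
  else if x = 5 ∨ y = 5 then
    (if x = 4 ∨ y = 4 then γ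
     else if x = 3 ∨ y = 3 then 2
     else 1)
  else if x = 4 ∨ y = 4 then 1
  else if (x = 2 ∧ y = 3) ∨ (x = 3 ∧ y = 2) then 1
  else 2

/-- The pentagonal inequality for real numbers (i.e. for the line metric). -/
private lemma pent_real (t1 t2 t3 s1 s2 : ℝ) :
    |t1-t2|+|t1-t3|+|t2-t3|+|s1-s2| ≤
    |t1-s1|+|t1-s2|+|t2-s1|+|t2-s2|+|t3-s1|+|t3-s2| := by
  rcases abs_cases (t1-t2) with ⟨e1,h1⟩|⟨e1,h1⟩ <;>
  rcases abs_cases (t1-t3) with ⟨e2,h2⟩|⟨e2,h2⟩ <;>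
  rcases abs_cases (t2-t3) with ⟨e3,h3⟩|⟨e3,h3⟩ <;>
  rcases abs_cases (s1-s2) with ⟨e4,h4⟩|⟨e4,h4⟩ <;>
  rw [e1,e2,e3,e4] <;>
  linarith [le_abs_self (t1-s1), neg_abs_le (t1-s1), le_abs_self (t1-s2), neg_abs_le (t1-s2),
    le_abs_self (t2-s1), neg_abs_le (t2-s1), le_abs_self (t2-s2), neg_abs_le (t2-s2),
    le_abs_self (t3-s1), neg_abs_le (t3-s1), le_abs_self (t3-s2), neg_abs_le (t3-s2)]

private lemma norm_sub_eq_integral {Ω : Type*} [MeasurableSpace Ω] {μ : Measure Ω}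
    (f g : Lp ℝ 1 μ) :
    ‖f - g‖ = ∫ ω, |f ω - g ω| ∂μ := by
  rw [MeasureTheory.L1.norm_eq_integral_norm]
  refine integral_congr_ae ?_
  filter_upwards [Lp.coeFn_sub f g] with ω h
  rw [h]; simp [Real.norm_eq_abs]

private lemma int_abs_sub {Ω : Type*} [MeasurableSpace Ω] {μ : Measure Ω} (f g : Lp ℝ 1 μ) :
    Integrable (fun ω => |f ω - g ω|) μ :=
  ((L1.integrable_coeFn f).sub (L1.integrable_coeFn g)).abs

/-- The pentagonal inequality in `L¹(μ)`. -/
private lemma pent_L1 {Ω : Type*} [MeasurableSpace Ω] {μ : Measure Ω}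
    (A B C Z1 Z2 : Lp ℝ 1 μ) :
    ‖A - B‖ + ‖A - C‖ + ‖B - C‖ + ‖Z1 - Z2‖ ≤
    ‖A - Z1‖ + ‖A - Z2‖ + ‖B - Z1‖ + ‖B - Z2‖ + ‖C - Z1‖ + ‖C - Z2‖ := by
  have iAB := int_abs_sub A B
  have iAC := int_abs_sub A C
  have iBC := int_abs_sub B C
  have iZ := int_abs_sub Z1 Z2
  have iA1 := int_abs_sub A Z1
  have iA2 := int_abs_sub A Z2
  have iB1 := int_abs_sub B Z1
  have iB2 := int_abs_sub B Z2
  have iC1 := int_abs_sub C Z1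
  have iC2 := int_abs_sub C Z2
  have e1 : (∫ ω, (|A ω - B ω| + |A ω - C ω| + |B ω - C ω| + |Z1 ω - Z2 ω|) ∂μ)
      = (∫ ω, |A ω - B ω| ∂μ) + (∫ ω, |A ω - C ω| ∂μ) + (∫ ω, |B ω - C ω| ∂μ)
        + (∫ ω, |Z1 ω - Z2 ω| ∂μ) := by
    rw [integral_add ((iAB.add'' iAC).add'' iBC) iZ, integral_add (iAB.add'' iAC) iBC,
      integral_add iAB iAC]
  have e2 : (∫ ω, (|A ω - Z1 ω| + |A ω - Z2 ω| + |B ω - Z1 ω| + |B ω - Z2 ω|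
        + |C ω - Z1 ω| + |C ω - Z2 ω|) ∂μ)
      = (∫ ω, |A ω - Z1 ω| ∂μ) + (∫ ω, |A ω - Z2 ω| ∂μ) + (∫ ω, |B ω - Z1 ω| ∂μ)
        + (∫ ω, |B ω - Z2 ω| ∂μ) + (∫ ω, |C ω - Z1 ω| ∂μ) + (∫ ω, |C ω - Z2 ω| ∂μ) := by
    rw [integral_add ((((iA1.add'' iA2).add'' iB1).add'' iB2).add'' iC1) iC2,
      integral_add (((iA1.add'' iA2).add'' iB1).add'' iB2) iC1,
      integral_add ((iA1.add'' iA2).add'' iB1) iB2,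
      integral_add (iA1.add'' iA2) iB1, integral_add iA1 iA2]
  have key := integral_mono (μ := μ)
    ((iAB.add'' iAC).add'' iBC |>.add'' iZ)
    (((((iA1.add'' iA2).add'' iB1).add'' iB2).add'' iC1).add'' iC2)
    (fun ω => pent_real (A ω) (B ω) (C ω) (Z1 ω) (Z2 ω))
  rw [norm_sub_eq_integral A B, norm_sub_eq_integral A C, norm_sub_eq_integral B C,
    norm_sub_eq_integral Z1 Z2, norm_sub_eq_integral A Z1, norm_sub_eq_integral A Z2,
    norm_sub_eq_integral B Z1, norm_sub_eq_integral B Z2, norm_sub_eq_integral C Z1,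
    norm_sub_eq_integral C Z2]
  rw [e1, e2] at key
  linarith [key]

/-- For `1 ≤ γ ≤ 2` the six-point function `dSix γ` is a metric, and for every `γ > 0`
it is not `L₁`-embeddable. -/
theorem dSix_metric_and_not_L1.{u} :
    (∀ γ : ℝ, 1 ≤ γ → γ ≤ 2 →
      (∀ x y : Fin 6, dSix γ x y = 0 ↔ x = y) ∧
      (∀ x y : Fin 6, dSix γ x y = dSix γ y x) ∧
      (∀ x y z : Fin 6, dSix γ x z ≤ dSix γ x y + dSix γ y z)) ∧
    (∀ γ : ℝ, 0 < γ →
      ∀ (Ω : Type u) (_ : MeasurableSpace Ω) (μ : Measure Ω)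
        (φ : Fin 6 → Lp ℝ 1 μ),
        ¬ (∀ x y : Fin 6, ‖φ x - φ y‖ = dSix γ x y)) := by
  constructor
  · intro γ h1 h2
    refine ⟨?_, ?_, ?_⟩
    · intro x y; fin_cases x <;> fin_cases y <;> simp [dSix] <;> intro h <;> linarith
    · intro x y; fin_cases x <;> fin_cases y <;> simp [dSix]
    · intro x y z
      fin_cases x <;> fin_cases y <;> fin_cases z <;> simp [dSix] <;> linarith
  · intro γ hγ Ω _ μ φ hφ
    have hAB : ‖φ 0 - φ 1‖ = 2 := by rw [hφ 0 1]; simp (config := { decide := true }) [dSix]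
    have hAC : ‖φ 0 - φ 2‖ = 2 := by rw [hφ 0 2]; simp (config := { decide := true }) [dSix]
    have hBC : ‖φ 1 - φ 2‖ = 2 := by rw [hφ 1 2]; simp (config := { decide := true }) [dSix]
    have hZ : ‖φ 4 - φ 5‖ = γ := by rw [hφ 4 5]; simp (config := { decide := true }) [dSix]
    have hA1 : ‖φ 0 - φ 4‖ = 1 := by rw [hφ 0 4]; simp (config := { decide := true }) [dSix]
    have hA2 : ‖φ 0 - φ 5‖ = 1 := by rw [hφ 0 5]; simp (config := { decide := true }) [dSix]
    have hB1 : ‖φ 1 - φ 4‖ = 1 := by rw [hφ 1 4]; simp (config := { decide := true }) [dSix]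
    have hB2 : ‖φ 1 - φ 5‖ = 1 := by rw [hφ 1 5]; simp (config := { decide := true }) [dSix]
    have hC1 : ‖φ 2 - φ 4‖ = 1 := by rw [hφ 2 4]; simp (config := { decide := true }) [dSix]
    have hC2 : ‖φ 2 - φ 5‖ = 1 := by rw [hφ 2 5]; simp (config := { decide := true }) [dSix]
    have := pent_L1 (φ 0) (φ 1) (φ 2) (φ 4) (φ 5)
    rw [hAB, hAC, hBC, hZ, hA1, hA2, hB1, hB2, hC1, hC2] at this
    linarith
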